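/- arXiv:2005.01894 — 2 statements merged into one kernel-verified Lean document; each statement's English description precedes it below -/
import Mathlib

section
/- Every polynomial comonad is a category (one direction of the Ahman–Uustalu theorem): let P be a polynomial functor whose associated functor carries a comonad structure, i.e. natural transformations ε to the identity functor and δ to the composite of the associated functor with itself, satisfying the counit laws and coassociativity. Then there exists a category structure on the type P.A together with, for each a : P.A, a bijection φ_a : P.B a ≃ Σ (b : P.A), (a ⟶ b) such that, writing cod d and arr d for the two components of φ_a d (so arr d : a ⟶ cod d), for every type X and every element (a, k) of the associated functor at X one has ε_X (a, k) = k (φ_a⁻¹ (a, 𝟙 a)) and δ_X (a, k) = (a, fun d ↦ (cod d, fun d' ↦ k (φ_a⁻¹ (cod d', arr d ≫ arr d')))). -/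
open CategoryTheory

universe u

/-- The associated functor `Type u ⥤ Type u` of a polynomial functor. -/
def PFunctor.toFunctor (P : PFunctor.{u}) : Type u ⥤ Type u where
  obj X := P.Obj X
  map f := TypeCat.ofHom (fun x => P.map f x)
  map_id := by intro X; apply ConcreteCategory.hom_ext; intro x; exact P.id_map x
  map_comp := by intro X Y Z f g; apply ConcreteCategory.hom_ext; intro x; exact (P.map_map f g x).symm

private lemma sigma_eta' {α : Type u} {K : α → Type u} {M : Type u}
    (p : Σ c, K c → M) {a : α} (h : p.1 = a) :
    p = ⟨a, fun d => p.2 (cast (congrArg K h.symm) d)⟩ := by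
  obtain ⟨x, f⟩ := p
  cases h
  rfl

private lemma sigma_fun_app {α : Type u} {K : α → Type u} {X : Type u}
    {p q : Σ c, K c → X} (h : p = q) (h1 : K q.1 = K p.1) (d : K q.1) :
    p.2 (cast h1 d) = q.2 d := by
  subst h; rfl

private lemma cast_app_eq {α : Type u} {K : α → Type u} {γ : Type u} {a b : α}
    (h : a = b) (F : ∀ x, K x → γ) (d : K b) :
    F a (cast (congrArg K h.symm) d) = F b d := by
  subst h; rfl

private lemma mk_snd_inj {α : Type u} {K : α → Type u} {a : α} {f h : K a}
    (hh : (⟨a, f⟩ : Σ x, K x) = ⟨a, h⟩) : f = h :=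
  eq_of_heq (Sigma.ext_iff.mp hh).2

/-- Ahman–Uustalu, one direction: every polynomial comonad is a category.
Given a comonad structure (`ε`, `δ`, counit laws, coassociativity) on the associated functor
of a polynomial `P`, there is a category structure (`Hom`, identities `ids`, composition
`comp`, with unitality and associativity) on the positions `P.A`, together with bijections
`φ a : P.B a ≃ Σ b, Hom a b`, such that `ε` and `δ` are given by the stated formulas. -/
theorem stmt_16 (P : PFunctor.{u})
    (ε : P.toFunctor ⟶ 𝟭 (Type u))
    (δ : P.toFunctor ⟶ P.toFunctor ⋙ P.toFunctor)
    (counit_left : ∀ X : Type u, δ.app X ≫ ε.app (P.toFunctor.obj X) = 𝟙 (P.toFunctor.obj X))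
    (counit_right : ∀ X : Type u, δ.app X ≫ P.toFunctor.map (ε.app X) = 𝟙 (P.toFunctor.obj X))
    (coassoc : ∀ X : Type u,
      δ.app X ≫ δ.app (P.toFunctor.obj X) = δ.app X ≫ P.toFunctor.map (δ.app X)) :
    ∃ (Hom : P.A → P.A → Type u)
      (ids : ∀ a : P.A, Hom a a)
      (comp : ∀ {a b c : P.A}, Hom a b → Hom b c → Hom a c)
      (φ : ∀ a : P.A, P.B a ≃ Σ b : P.A, Hom a b),
      (∀ (a b : P.A) (f : Hom a b), comp (ids a) f = f) ∧
      (∀ (a b : P.A) (f : Hom a b), comp f (ids b) = f) ∧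
      (∀ (a b c d : P.A) (f : Hom a b) (g : Hom b c) (h : Hom c d),
        comp (comp f g) h = comp f (comp g h)) ∧
      (∀ (X : Type u) (a : P.A) (k : P.B a → X),
        ε.app X (⟨a, k⟩ : P.Obj X) = k ((φ a).symm ⟨a, ids a⟩)) ∧
      (∀ (X : Type u) (a : P.A) (k : P.B a → X),
        δ.app X (⟨a, k⟩ : P.Obj X) =
          (⟨a, fun d => ⟨(φ a d).1, fun d' =>
            k ((φ a).symm ⟨(φ (φ a d).1 d').1, comp (φ a d).2 (φ (φ a d).1 d').2⟩)⟩⟩ : P.Obj (P.Obj X))) := by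
  have hε : ∀ (X : Type u) (a : P.A) (k : P.B a → X),
      ε.app X ⟨a, k⟩ = k (ε.app (P.B a) ⟨a, _root_.id⟩) :=
    fun X a k => ConcreteCategory.congr_hom (ε.naturality (TypeCat.ofHom k)) (⟨a, _root_.id⟩ : P.Obj (P.B a))
  have hδ0 : ∀ (X : Type u) (a : P.A) (k : P.B a → X),
      δ.app X ⟨a, k⟩ = P.map (P.map k) (δ.app (P.B a) ⟨a, _root_.id⟩) :=
    fun X a k => ConcreteCategory.congr_hom (δ.naturality (TypeCat.ofHom k)) (⟨a, _root_.id⟩ : P.Obj (P.B a))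
  have hfst : ∀ a : P.A, (δ.app (P.B a) ⟨a, _root_.id⟩).1 = a := by
    intro a
    exact congrArg Sigma.fst (ConcreteCategory.congr_hom (counit_right (P.B a)) (⟨a, _root_.id⟩ : P.Obj (P.B a)))
  let g : ∀ a : P.A, P.B a → P.Obj (P.B a) := fun a d =>
    (δ.app (P.B a) ⟨a, _root_.id⟩).2 (cast (congrArg P.B (hfst a).symm) d)
  have hD : ∀ a, δ.app (P.B a) ⟨a, _root_.id⟩ = ⟨a, g a⟩ :=
    fun a => sigma_eta' _ (hfst a)
  have hδ : ∀ (X : Type u) (a : P.A) (k : P.B a → X),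
      δ.app X ⟨a, k⟩ = ⟨a, fun d => P.map k (g a d)⟩ := by
    intro X a k
    rw [hδ0, hD]
    rfl
  let cod : ∀ a : P.A, P.B a → P.A := fun a d => (g a d).1
  let s : ∀ (a : P.A) (d : P.B a), P.B (cod a d) → P.B a := fun a d => (g a d).2
  let e : ∀ a : P.A, P.B a := fun a => ε.app (P.B a) ⟨a, _root_.id⟩
  have hR : ∀ (a : P.A) (d : P.B a), s a d (e (cod a d)) = d := by
    intro a d
    have h2 : P.map (ε.app (P.B a)) ⟨a, g a⟩ = (⟨a, _root_.id⟩ : P.Obj (P.B a)) := by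
      rw [← hD a]
      exact ConcreteCategory.congr_hom (counit_right (P.B a)) (⟨a, _root_.id⟩ : P.Obj (P.B a))
    have h2' : (⟨a, fun d => ε.app (P.B a) (g a d)⟩ : P.Obj (P.B a)) = ⟨a, _root_.id⟩ := h2
    have h3 := congrFun (mk_snd_inj h2') d
    exact (hε (P.B a) (cod a d) (s a d)).symm.trans h3
  have hL : ∀ a : P.A, g a (e a) = ⟨a, _root_.id⟩ := by
    intro a
    have h2 : ε.app (P.Obj (P.B a)) ⟨a, g a⟩ = (⟨a, _root_.id⟩ : P.Obj (P.B a)) := by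
      exact (congrArg (fun x => ε.app (P.Obj (P.B a)) x) (hD a)).symm.trans (ConcreteCategory.congr_hom (counit_left (P.B a)) (⟨a, _root_.id⟩ : P.Obj (P.B a)))
    exact (hε (P.Obj (P.B a)) a (g a)).symm.trans h2
  have CA' : ∀ (a : P.A) (d : P.B a) (d' : P.B (cod a d)),
      g a (s a d d') = ⟨cod (cod a d) d', fun d'' => s a d (s (cod a d) d' d'')⟩ := by
    intro a d d'
    have h2 : δ.app (P.Obj (P.B a)) ⟨a, g a⟩ = P.map (δ.app (P.B a)) ⟨a, g a⟩ := by
      exact (congrArg (fun x => δ.app (P.Obj (P.B a)) x) (hD a)).symm.trans ((ConcreteCategory.congr_hom (coassoc (P.B a)) (⟨a, _root_.id⟩ : P.Obj (P.B a))).trans (congrArg (fun x => P.map (δ.app (P.B a)) x) (hD a)))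
    have h3 : (⟨a, fun d => P.map (g a) (g a d)⟩ : P.Obj (P.Obj (P.Obj (P.B a)))) =
        ⟨a, fun d => δ.app (P.B a) (g a d)⟩ := by
      exact (hδ (P.Obj (P.B a)) a (g a)).symm.trans h2
    have h4 := congrFun (mk_snd_inj h3) d
    have h5 : (⟨cod a d, fun d' => g a (s a d d')⟩ : P.Obj (P.Obj (P.B a))) =
        ⟨cod a d, fun d' => P.map (s a d) (g (cod a d) d')⟩ :=
      h4.trans (hδ (P.B a) (cod a d) (s a d))
    exact congrFun (mk_snd_inj h5) d'
  let Hom : P.A → P.A → Type u := fun a b => {d : P.B a // cod a d = b}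
  let ids : ∀ a : P.A, Hom a a := fun a => ⟨e a, congrArg Sigma.fst (hL a)⟩
  let comp : ∀ {a b c : P.A}, Hom a b → Hom b c → Hom a c := fun {a b c} f g' =>
    ⟨s a f.1 (cast (congrArg P.B f.2.symm) g'.1),
      (congrArg Sigma.fst (CA' a f.1 (cast (congrArg P.B f.2.symm) g'.1))).trans
        ((cast_app_eq f.2 cod g'.1).trans g'.2)⟩
  let φ : ∀ a : P.A, P.B a ≃ Σ b : P.A, Hom a b := fun a =>
    { toFun := fun d => ⟨cod a d, d, rfl⟩
      invFun := fun p => p.2.1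
      left_inv := fun d => rfl
      right_inv := fun p => by obtain ⟨b, d, h⟩ := p; cases h; rfl }
  refine ⟨Hom, ids, @comp, φ, ?_, ?_, ?_, ?_, ?_⟩
  · -- left unit
    rintro a b ⟨d, rfl⟩
    apply Subtype.ext
    exact sigma_fun_app (hL a) _ d
  · -- right unit
    rintro a b ⟨d, rfl⟩
    apply Subtype.ext
    exact hR a d
  · -- associativity
    rintro a b c dd ⟨d, rfl⟩ ⟨d', rfl⟩ ⟨d'', rfl⟩
    apply Subtype.ext
    exact sigma_fun_app (CA' a d d') _ d''
  · -- counit formula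
    intro X a k
    exact hε X a k
  · -- comultiplication formula
    intro X a k
    rw [hδ X a k]
    rfl
end

section
/- The category of bimorphic lenses is equivalent to the full subcategory of polynomial functors spanned by monomials: the category whose objects are pairs of types (A, B) and whose morphisms (A, B) → (A', B') are pairs of functions (v : A → A', u : A × B' → B), with identity (id, (a, b) ↦ b) and composite of (v₁, u₁) : (A,B) → (A',B') and (v₂, u₂) : (A',B') → (A'',B'') given by (v₂ ∘ v₁, (a, b'') ↦ u₁ (a, u₂ (v₁ a, b''))), is equivalent to the category whose objects are pairs of types (A, B), whose morphisms (A, B) → (A', B') are the natural transformations from the functor X ↦ A × (B → X) to the functor X ↦ A' × (B' → X), with the usual identity and vertical composition of natural transformations; the equivalence is the identity on objects and sends (v, u) to the natural transformation X ↦ ((a, k) ↦ (v a, fun b' ↦ k (u (a, b')))). -/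
open CategoryTheory

universe u

/-- The category of bimorphic lenses: objects are pairs of types `(A, B)`, morphisms
`(A, B) → (A', B')` are pairs `(v : A → A', u : A × B' → B)`. -/
def LensCat : Type (u + 1) := Type u × Type u

instance : Category.{u} LensCat.{u} where
  Hom P Q := (P.1 → Q.1) × (P.1 × Q.2 → P.2)
  id P := (id, fun ab => ab.2)
  comp f g := (g.1 ∘ f.1, fun ab'' => f.2 (ab''.1, g.2 (f.1 ab''.1, ab''.2)))
  id_comp := by intros; rfl
  comp_id := by intros; rfl
  assoc := by intros; rfl

/-- The associated functor `X ↦ A × (B → X)` of the monomial `Ay^B` (position type `A`, direction type `B`). -/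
def monFun (A B : Type u) : Type u ⥤ Type u where
  obj X := A × (B → X)
  map f := TypeCat.ofHom (fun x => (x.1, f ∘ x.2))
  map_id := by intro X; ext x <;> rfl
  map_comp := by intros; rfl

/-- The full subcategory of polynomial functors spanned by monomials: objects are pairs of
types `(A, B)`, morphisms `(A, B) → (A', B')` are natural transformations
`(X ↦ A × (B → X)) ⟶ (X ↦ A' × (B' → X))`. -/
def Monomials : Type (u + 1) :=
  InducedCategory (Type u ⥤ Type u) (fun P : Type u × Type u => monFun P.1 P.2)

instance : Category.{u + 1} Monomials.{u} :=
  inferInstanceAs (Category (InducedCategory (Type u ⥤ Type u) (fun P : Type u × Type u => monFun P.1 P.2)))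

/-- The identity-on-objects functor sending a lens `(v, u)` to the natural transformation
`X ↦ ((a, k) ↦ (v a, fun b' ↦ k (u (a, b'))))`. -/
def lensToMon : LensCat.{u} ⥤ Monomials.{u} where
  obj P := (show Type u × Type u from P : Monomials.{u})
  map {P Q} φ :=
    InducedCategory.homMk
    { app := fun X => TypeCat.ofHom (fun x => (φ.1 x.1, fun b' => x.2 (φ.2 (x.1, b'))))
      naturality := by intros; rfl }
  map_id := by intros; rfl
  map_comp := by intros; rfl

/-- the category of bimorphic lenses is equivalent to the full subcategory of
polynomial functors spanned by the monomials, via the identity-on-objects functor above. -/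
theorem stmt_18 : lensToMon.{u}.IsEquivalence := by
  have hfull : lensToMon.{u}.Full := by
    constructor
    intro P Q η
    refine ⟨(fun a => (η.hom.app P.2 (a, id)).1,
             fun ab' => (η.hom.app P.2 (ab'.1, id)).2 ab'.2), ?_⟩
    apply InducedCategory.hom_ext
    apply NatTrans.ext
    funext X
    apply ConcreteCategory.hom_ext
    intro x
    have h := ConcreteCategory.congr_hom (η.hom.naturality (TypeCat.ofHom x.2 : P.2 ⟶ X)) (show P.1 × (P.2 → P.2) from (x.1, id))
    exact h.symm
  have hfaithful : lensToMon.{u}.Faithful := by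
    constructor
    intro P Q φ ψ h
    have h' : ∀ x, (lensToMon.map φ).hom.app P.2 x = (lensToMon.map ψ).hom.app P.2 x :=
      fun x => by rw [h]
    obtain ⟨v₁, u₁⟩ := φ
    obtain ⟨v₂, u₂⟩ := ψ
    have h1 : ∀ a : P.1, v₁ a = v₂ a := fun a =>
      congrArg Prod.fst (h' (a, id))
    have h2 : ∀ ab : P.1 × Q.2, u₁ ab = u₂ ab := fun ab =>
      congrFun (congrArg Prod.snd (h' (ab.1, id))) ab.2
    exact Prod.ext (funext h1) (funext h2)
  have hess : lensToMon.{u}.EssSurj := ⟨fun P => ⟨P, ⟨Iso.refl _⟩⟩⟩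
  exact Functor.IsEquivalence.mk
end
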